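/- Assume the robust control Lyapunov hypothesis holds and fix a horizon N ≥ 1. Let x : ℕ → ℝ^n, u : ℕ → ℝ^d and w : ℕ → ℝ^n satisfy: V N (x 0) ≠ ⊤; for all k, w k ∈ W, x (k+1) = A (x k) + B (u k) + w k, x k ∈ X, u k ∈ U, and u k attains the infimum defining V N at x k (i.e. ⨆_{w ∈ W} ((h(x k, u k) : EReal) + V (N−1)(A (x k) + B (u k) + w)) ≤ V N (x k)). Then (recursive feasibility and performance bound): for every t, V N (x t) ≤ V N (x 0), in particular V N (x t) ≠ ⊤, and for every horizon T, (Σ_{k<T} h(x k, u k) : EReal) ≤ V N (x 0). -/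

import Mathlib

/-- Recursive feasibility and performance bound (Theorem 1 combined with the
telescoping argument of Theorem 2): along any closed-loop trajectory in which
the applied input attains the infimum defining `V N`, the value `V N (x t)`
never exceeds `V N (x 0)` (hence stays finite) and the accumulated stage cost
over any horizon `T'` is bounded by `V N (x 0)`. -/
theorem lmpc_recursive_feasibility_and_cost_bound
    {n d : ℕ}
    (A : (Fin n → ℝ) →ₗ[ℝ] (Fin n → ℝ)) (B : (Fin d → ℝ) →ₗ[ℝ] (Fin n → ℝ))
    (W X : Set (Fin n → ℝ)) (U : Set (Fin d → ℝ))
    (hW : W.Nonempty)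
    (h : (Fin n → ℝ) × (Fin d → ℝ) → ℝ)
    (hpos : ∀ x u, 0 ≤ h (x, u))
    (CS : Set (Fin n → ℝ)) (hCSX : CS ⊆ X)
    (Q : (Fin n → ℝ) → ℝ) (hQ0 : ∀ x ∈ CS, 0 ≤ Q x)
    (Qbar : (Fin n → ℝ) → EReal)
    (hQbarIn : ∀ x ∈ CS, Qbar x = (Q x : EReal))
    (hQbarOut : ∀ x ∉ CS, Qbar x = ⊤)
    (T : ((Fin n → ℝ) → EReal) → (Fin n → ℝ) → EReal)
    (hTin : ∀ f, ∀ x ∈ X, T f x =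
      ⨅ u ∈ U, ⨆ w ∈ W, ((h (x, u) : EReal) + f (A x + B u + w)))
    (hTout : ∀ f, ∀ x ∉ X, T f x = ⊤)
    (V : ℕ → (Fin n → ℝ) → EReal)
    (hV0 : V 0 = Qbar) (hVs : ∀ k, V (k + 1) = T (V k))
    (hRCL : ∀ x ∈ CS, ∃ u ∈ U, ∀ w ∈ W,
      A x + B u + w ∈ CS ∧ h (x, u) + Q (A x + B u + w) ≤ Q x)
    (N : ℕ) (hN : 1 ≤ N)
    (x : ℕ → Fin n → ℝ) (u : ℕ → Fin d → ℝ) (w : ℕ → Fin n → ℝ)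
    (hfeas0 : V N (x 0) ≠ ⊤)
    (hw : ∀ k, w k ∈ W)
    (hdyn : ∀ k, x (k + 1) = A (x k) + B (u k) + w k)
    (hxX : ∀ k, x k ∈ X) (huU : ∀ k, u k ∈ U)
    (hopt : ∀ k, (⨆ w' ∈ W,
      ((h (x k, u k) : EReal) + V (N - 1) (A (x k) + B (u k) + w'))) ≤ V N (x k)) :
    (∀ t, V N (x t) ≤ V N (x 0) ∧ V N (x t) ≠ ⊤) ∧
    ∀ T' : ℕ, ((∑ k ∈ Finset.range T', h (x k, u k) : ℝ) : EReal) ≤ V N (x 0) := by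
  obtain ⟨m, rfl⟩ : ∃ m, N = m + 1 := ⟨N - 1, (Nat.succ_pred_eq_of_pos hN).symm⟩
  -- nonnegativity of all value functions
  have hVnn : ∀ k x', (0 : EReal) ≤ V k x' := by
    intro k
    induction k with
    | zero =>
      intro x'
      rw [hV0]
      by_cases hx : x' ∈ CS
      · rw [hQbarIn x' hx]; exact_mod_cast hQ0 x' hx
      · rw [hQbarOut x' hx]; exact le_top
    | succ k ih =>
      intro x'
      rw [hVs k]
      by_cases hx : x' ∈ X
      · rw [hTin _ _ hx]
        refine le_iInf fun u' => le_iInf fun hu => ?_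
        obtain ⟨w0, hw0⟩ := hW
        refine le_trans ?_ (le_iSup_of_le w0 (le_iSup_of_le hw0 le_rfl))
        exact add_nonneg (by exact_mod_cast hpos x' u') (ih _)
      · rw [hTout _ _ hx]; exact le_top
  -- monotonicity of T
  have hTmono : ∀ f g : (Fin n → ℝ) → EReal, (∀ y, f y ≤ g y) → ∀ y, T f y ≤ T g y := by
    intro f g hfg y
    by_cases hy : y ∈ X
    · rw [hTin f y hy, hTin g y hy]
      exact iInf_mono fun u' => iInf_mono fun _ => iSup_mono fun w' =>
        iSup_mono fun _ => add_le_add_right (hfg _) _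
    · rw [hTout f y hy, hTout g y hy]
  -- V 1 ≤ V 0
  have hdec1 : ∀ y, V 1 y ≤ V 0 y := by
    intro y
    rw [hVs 0, hV0]
    by_cases hy : y ∈ CS
    · rw [hTin _ _ (hCSX hy), hQbarIn y hy]
      obtain ⟨u0, hu0, hprop⟩ := hRCL y hy
      refine iInf_le_of_le u0 (iInf_le_of_le hu0 ?_)
      refine iSup_le fun w' => iSup_le fun hw' => ?_
      obtain ⟨hin, hle⟩ := hprop w' hw'
      rw [hQbarIn _ hin]
      calc ((h (y, u0) : EReal) + (Q (A y + B u0 + w') : EReal))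
          = ((h (y, u0) + Q (A y + B u0 + w') : ℝ) : EReal) := (EReal.coe_add _ _).symm
        _ ≤ (Q y : EReal) := by exact_mod_cast hle
    · rw [hQbarOut y hy]; exact le_top
  -- V (k+1) ≤ V k
  have hdec : ∀ k y, V (k + 1) y ≤ V k y := by
    intro k
    induction k with
    | zero => exact hdec1
    | succ k ih =>
      intro y
      have ih' : ∀ y, T (V k) y ≤ V k y := by rw [← hVs k]; exact ih
      rw [hVs (k + 1), hVs k]
      exact hTmono _ _ ih' y
  -- key step inequality
  have hstep : ∀ k, (h (x k, u k) : EReal) + V (m + 1) (x (k + 1)) ≤ V (m + 1) (x k) := by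
    intro k
    have h1 : (h (x k, u k) : EReal) + V ((m + 1) - 1) (A (x k) + B (u k) + w k)
        ≤ V (m + 1) (x k) :=
      le_trans (le_iSup₂_of_le (w k) (hw k) le_rfl) (hopt k)
    have h2 : V (m + 1) (x (k + 1)) ≤ V ((m + 1) - 1) (x (k + 1)) := by
      simpa using hdec m (x (k + 1))
    calc (h (x k, u k) : EReal) + V (m + 1) (x (k + 1))
        ≤ (h (x k, u k) : EReal) + V ((m + 1) - 1) (x (k + 1)) := add_le_add_right h2 _
      _ = (h (x k, u k) : EReal) + V ((m + 1) - 1) (A (x k) + B (u k) + w k) := by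
          rw [hdyn k]
      _ ≤ V (m + 1) (x k) := h1
  have hmonotraj : ∀ t, V (m + 1) (x t) ≤ V (m + 1) (x 0) := by
    intro t
    induction t with
    | zero => exact le_rfl
    | succ t ih =>
      refine le_trans (le_trans ?_ (hstep t)) ih
      exact le_add_of_nonneg_left (by exact_mod_cast hpos (x t) (u t))
  have hkey : ∀ T' : ℕ,
      ((∑ k ∈ Finset.range T', h (x k, u k) : ℝ) : EReal) + V (m + 1) (x T')
        ≤ V (m + 1) (x 0) := by
    intro T'
    induction T' with
    | zero => simp
    | succ T' ih =>
      rw [Finset.sum_range_succ, EReal.coe_add, add_assoc]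
      exact le_trans (add_le_add_right (hstep T') _) ih
  refine ⟨fun t => ⟨hmonotraj t, fun htop => hfeas0 (top_le_iff.mp (htop ▸ hmonotraj t))⟩,
    fun T' => ?_⟩
  exact le_trans (le_add_of_nonneg_right (hVnn _ _)) (hkey T')
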